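/- Let D be an implication B → (f = v) where B is a conjunction of possibly negated atomic formulas, f is a ground term, and every variable occurring in D (including v) occurs in some non-negated conjunct of B of the form x = t or t = x, with the variable dependency graph of B acyclic. Then the substitution process that, while some variable x remains in D, selects a non-negated conjunct x = t or t = x in the body B such that no variable occurring in t depends on x and replaces D by D^x_t, terminates in a formula containing no variables, and the universal closure of D is logically equivalent to the resulting variable-free formula. -/

import Mathlib

/-!
A deep embedding of (one-sorted) first-order logic with equality,
following the functional stable model semantics of
Bartholomew & Lee, used by the ASPMT / aspsmt2smt paper.
-/

namespace ASPMT

/-- A first-order signature: function symbols and predicate symbols with arities. -/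
structure Signature where
  Func : Type
  Pred : Type
  funcAr : Func → ℕ
  predAr : Pred → ℕ

variable {σ : Signature}

/-- First-order terms; variables are indexed by natural numbers. -/
inductive Term (σ : Signature) : Type
  | var : ℕ → Term σ
  | app : (f : σ.Func) → (Fin (σ.funcAr f) → Term σ) → Term σ

/-- First-order formulas (with equality). `¬F` is `F.imp falsum`. -/
inductive Formula (σ : Signature) : Type
  | falsum : Formula σ
  | eq : Term σ → Term σ → Formula σ
  | pred : (p : σ.Pred) → (Fin (σ.predAr p) → Term σ) → Formula σ
  | and : Formula σ → Formula σ → Formula σ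
  | or : Formula σ → Formula σ → Formula σ
  | imp : Formula σ → Formula σ → Formula σ
  | all : ℕ → Formula σ → Formula σ
  | ex : ℕ → Formula σ → Formula σ

/-- Negation, as an abbreviation. -/
def Formula.not (F : Formula σ) : Formula σ := F.imp .falsum

/-- An interpretation (structure) for the signature, with nonempty universe. -/
structure Interp (σ : Signature) where
  M : Type
  nonempty : Nonempty M
  funcI : (f : σ.Func) → (Fin (σ.funcAr f) → M) → M
  predI : (p : σ.Pred) → (Fin (σ.predAr p) → M) → Prop

/-- Updating a variable assignment at a variable. -/
def updAssign {α : Type} (ν : ℕ → α) (x : ℕ) (a : α) : ℕ → α :=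
  fun y => if y = x then a else ν y

/-- Evaluation of a term in an interpretation under a variable assignment. -/
def Term.eval (I : Interp σ) (ν : ℕ → I.M) : Term σ → I.M
  | .var x => ν x
  | .app f ts => I.funcI f fun i => (ts i).eval I ν

/-- Tarskian satisfaction. -/
def Formula.Sat (I : Interp σ) : (ν : ℕ → I.M) → Formula σ → Prop
  | _, .falsum => False
  | ν, .eq t u => t.eval I ν = u.eval I ν
  | ν, .pred p ts => I.predI p fun i => (ts i).eval I ν
  | ν, .and F G => F.Sat I ν ∧ G.Sat I ν
  | ν, .or F G => F.Sat I ν ∨ G.Sat I ν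
  | ν, .imp F G => F.Sat I ν → G.Sat I ν
  | ν, .all x F => ∀ a : I.M, F.Sat I (updAssign ν x a)
  | ν, .ex x F => ∃ a : I.M, F.Sat I (updAssign ν x a)

/-- Variables occurring in a term. -/
def Term.vars : Term σ → Set ℕ
  | .var x => {x}
  | .app _ ts => ⋃ i, (ts i).vars

/-- Free variables of a formula. -/
def Formula.fv : Formula σ → Set ℕ
  | .falsum => ∅
  | .eq t u => t.vars ∪ u.vars
  | .pred _ ts => ⋃ i, (ts i).vars
  | .and F G => F.fv ∪ G.fv
  | .or F G => F.fv ∪ G.fv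
  | .imp F G => F.fv ∪ G.fv
  | .all x F => F.fv \ {x}
  | .ex x F => F.fv \ {x}

end ASPMT


namespace ASPMT

variable {σ : Signature}

/-- Substitution of a term `t` for a variable `x` in a term. -/
def Term.subst : Term σ → ℕ → Term σ → Term σ
  | .var y, x, t => if y = x then t else .var y
  | .app f ts, x, t => .app f fun i => (ts i).subst x t

/-- Atomic formulas. -/
inductive Atom (σ : Signature) : Type
  | eq : Term σ → Term σ → Atom σ
  | pred : (p : σ.Pred) → (Fin (σ.predAr p) → Term σ) → Atom σ

/-- A literal: an atomic formula, possibly preceded with `¬` (`pos = false`). -/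
structure Lit (σ : Signature) where
  atom : Atom σ
  pos : Bool

/-- A conjunction `C₁ ∧ … ∧ Cₙ` of possibly negated atomic formulas. -/
abbrev Conj (σ : Signature) := List (Lit σ)

/-- Variables occurring in an atomic formula. -/
def Atom.vars : Atom σ → Set ℕ
  | .eq t u => t.vars ∪ u.vars
  | .pred _ ts => ⋃ i, (ts i).vars

/-- Variables occurring in a literal. -/
def Lit.vars (l : Lit σ) : Set ℕ := l.atom.vars

/-- Variables occurring in a conjunction of literals. -/
def conjVars (L : Conj σ) : Set ℕ := {x | ∃ l ∈ L, x ∈ l.vars}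

/-- Substitution in an atomic formula. -/
def Atom.subst : Atom σ → ℕ → Term σ → Atom σ
  | .eq a b, x, t => .eq (a.subst x t) (b.subst x t)
  | .pred p ts, x, t => .pred p fun i => (ts i).subst x t

/-- Substitution in a literal. -/
def Lit.subst (l : Lit σ) (x : ℕ) (t : Term σ) : Lit σ := ⟨l.atom.subst x t, l.pos⟩

/-- `D^x_t`: the result of substituting `t` for every occurrence of the variable
`x` in the conjunction `D`. -/
def conjSubst (x : ℕ) (t : Term σ) (L : Conj σ) : Conj σ := L.map (Lit.subst · x t)

/-- The literal `l` is a non-negated conjunct of the form `x = t` or `t = x`. -/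
def isolator (x : ℕ) (l : Lit σ) : Prop :=
  l.pos = true ∧ ∃ t : Term σ, l.atom = .eq (.var x) t ∨ l.atom = .eq t (.var x)

/-- The edge relation of the variable dependency graph of a conjunction `L`:
there is an edge from `v` to `u` if some conjunct of `L` is `v = t` or `t = v`
for a term `t` in which `u` appears. -/
def depEdgeC (L : Conj σ) (v u : ℕ) : Prop :=
  ∃ l ∈ L, l.pos = true ∧ ∃ t : Term σ,
    (l.atom = .eq (.var v) t ∨ l.atom = .eq t (.var v)) ∧ u ∈ t.vars

/-- `v` depends on `u`: there is a directed path (of length ≥ 1) from `v` to `u`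
in the variable dependency graph of `L`. -/
def dependsOn (L : Conj σ) : ℕ → ℕ → Prop := Relation.TransGen (depEdgeC L)

/-- The variable dependency graph of `L` is acyclic. -/
def AcyclicDeps (L : Conj σ) : Prop := ∀ v, ¬ dependsOn L v v

/-- One step of the substitution process: select a variable `x` still occurring in
`L` and a non-negated conjunct `x = t` or `t = x` of `L` such that no variable
occurring in `t` depends on `x`, and replace `L` by `L^x_t`. -/
def SubstStep (L L' : Conj σ) : Prop :=
  ∃ x ∈ conjVars L, ∃ t : Term σ,
    (∃ l ∈ L, l.pos = true ∧ (l.atom = .eq (.var x) t ∨ l.atom = .eq t (.var x))) ∧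
    (∀ u ∈ t.vars, ¬ dependsOn L u x) ∧
    L' = conjSubst x t L

/-- Satisfaction of an atomic formula. -/
def Atom.SatA (I : Interp σ) (ν : ℕ → I.M) : Atom σ → Prop
  | .eq t u => t.eval I ν = u.eval I ν
  | .pred p ts => I.predI p fun i => (ts i).eval I ν

/-- Satisfaction of a literal. -/
def Lit.SatL (I : Interp σ) (ν : ℕ → I.M) (l : Lit σ) : Prop :=
  if l.pos then l.atom.SatA I ν else ¬ l.atom.SatA I ν

/-- Satisfaction of a conjunction of literals. -/
def SatConj (I : Interp σ) (ν : ℕ → I.M) (L : Conj σ) : Prop :=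
  ∀ l ∈ L, l.SatL I ν

end ASPMT


namespace ASPMT

variable {σ : Signature}

/-- The state of the substitution process on an implication `B → (f = u)`:
the body `B` together with the current value term `u` (initially the variable `v`);
the ground head term `f` is unaffected by substitutions. -/
abbrev State8 (σ : Signature) := Conj σ × Term σ

/-- Variables occurring in the implication `B → (f = u)` (with `f` ground). -/
def vars8 (S : State8 σ) : Set ℕ := conjVars S.1 ∪ S.2.vars

/-- One step of the substitution process on `D = (B → f = u)`: select a variable
`x` still occurring in `D` and a non-negated conjunct `x = t` or `t = x` in the
body `B` such that no variable occurring in `t` depends on `x`, and replace `D`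
by `D^x_t`. -/
def SubstStep8 (S S' : State8 σ) : Prop :=
  ∃ x ∈ vars8 S, ∃ t : Term σ,
    (∃ l ∈ S.1, l.pos = true ∧
      (l.atom = .eq (.var x) t ∨ l.atom = .eq t (.var x))) ∧
    (∀ u ∈ t.vars, ¬ dependsOn S.1 u x) ∧
    S' = (conjSubst x t S.1, S.2.subst x t)

end ASPMT
namespace ASPMT

variable {σ : Signature}

/-! ### Auxiliary lemmas -/

lemma Term.vars_subst {u : ℕ} : ∀ {s : Term σ} {x : ℕ} {t : Term σ},
    u ∈ (s.subst x t).vars → (u ∈ s.vars ∧ u ≠ x) ∨ (x ∈ s.vars ∧ u ∈ t.vars)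
  | .var y, x, t => by
    by_cases h : y = x
    · subst h
      simp only [Term.subst, if_pos rfl, Term.vars, Set.mem_singleton_iff]
      intro hu
      refine Or.inr ⟨?_, hu⟩
      trivial
    · simp only [Term.subst, if_neg h, Term.vars, Set.mem_singleton_iff]
      rintro rfl
      exact Or.inl ⟨rfl, h⟩
  | .app f ts, x, t => by
    intro h
    simp only [Term.subst, Term.vars, Set.mem_iUnion] at h ⊢
    obtain ⟨i, hi⟩ := h
    rcases Term.vars_subst hi with ⟨h1, h2⟩ | ⟨h1, h2⟩
    · exact Or.inl ⟨⟨i, h1⟩, h2⟩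
    · exact Or.inr ⟨⟨i, h1⟩, h2⟩

lemma Term.eval_subst (I : Interp σ) (ν : ℕ → I.M) (x : ℕ) (t : Term σ) :
    ∀ s : Term σ, (s.subst x t).eval I ν = s.eval I (updAssign ν x (t.eval I ν))
  | .var y => by
    by_cases h : y = x <;> simp [Term.subst, Term.eval, updAssign, h]
  | .app g ts => by
    simp only [Term.subst, Term.eval]
    congr 1
    funext i
    exact Term.eval_subst I ν x t (ts i)

lemma Term.eval_congr (I : Interp σ) {ν ν' : ℕ → I.M} :
    ∀ {s : Term σ}, (∀ y ∈ s.vars, ν y = ν' y) → s.eval I ν = s.eval I ν'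
  | .var y, h => h y (by simp [Term.vars])
  | .app g ts, h => by
    simp only [Term.eval]
    congr 1
    funext i
    exact Term.eval_congr I fun y hy =>
      h y (by simp only [Term.vars, Set.mem_iUnion]; exact ⟨i, hy⟩)

lemma eval_ground (I : Interp σ) {f : Term σ} (hf : f.vars = ∅) (ν ν' : ℕ → I.M) :
    f.eval I ν = f.eval I ν' :=
  Term.eval_congr I fun y hy => absurd (hf ▸ hy) (Set.notMem_empty y)

lemma Atom.satA_subst (I : Interp σ) (ν : ℕ → I.M) (x : ℕ) (t : Term σ) (a : Atom σ) :
    (a.subst x t).SatA I ν ↔ a.SatA I (updAssign ν x (t.eval I ν)) := by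
  cases a <;> simp [Atom.subst, Atom.SatA, Term.eval_subst]

lemma Lit.satL_subst (I : Interp σ) (ν : ℕ → I.M) (x : ℕ) (t : Term σ) (l : Lit σ) :
    (l.subst x t).SatL I ν ↔ l.SatL I (updAssign ν x (t.eval I ν)) := by
  simp only [Lit.SatL, Lit.subst]
  by_cases hpos : l.pos = true <;> simp [hpos, Atom.satA_subst]

lemma satConj_subst (I : Interp σ) (ν : ℕ → I.M) (x : ℕ) (t : Term σ) (L : Conj σ) :
    SatConj I ν (conjSubst x t L) ↔ SatConj I (updAssign ν x (t.eval I ν)) L := by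
  constructor
  · intro h l hl
    have := h (l.subst x t) (List.mem_map_of_mem hl)
    rwa [Lit.satL_subst] at this
  · rintro h l' hl'
    obtain ⟨l, hl, rfl⟩ := List.mem_map.mp hl'
    rw [Lit.satL_subst]
    exact h l hl

lemma Atom.satA_congr (I : Interp σ) {ν ν' : ℕ → I.M} {a : Atom σ}
    (h : ∀ y ∈ a.vars, ν y = ν' y) : a.SatA I ν ↔ a.SatA I ν' := by
  cases a with
  | eq s₁ s₂ =>
    simp only [Atom.SatA]
    rw [Term.eval_congr I (fun y hy => h y (Set.mem_union_left _ hy)),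
        Term.eval_congr I (fun y hy => h y (Set.mem_union_right _ hy))]
  | pred p ts =>
    simp only [Atom.SatA]
    have he : (fun i => (ts i).eval I ν) = fun i => (ts i).eval I ν' := by
      funext i
      exact Term.eval_congr I fun y hy =>
        h y (by simp only [Atom.vars, Set.mem_iUnion]; exact ⟨i, hy⟩)
    rw [he]

lemma satConj_congr (I : Interp σ) {ν ν' : ℕ → I.M} {L : Conj σ}
    (h : ∀ y ∈ conjVars L, ν y = ν' y) : SatConj I ν L ↔ SatConj I ν' L := by
  unfold SatConj
  apply forall₂_congr
  intro l hl
  have hv : ∀ y ∈ l.atom.vars, ν y = ν' y := fun y hy => h y ⟨l, hl, hy⟩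
  simp only [Lit.SatL]
  cases l.pos <;> simp [Atom.satA_congr I hv]

lemma Term.vars_finite : ∀ t : Term σ, t.vars.Finite
  | .var x => Set.finite_singleton x
  | .app f ts => Set.finite_iUnion fun i => Term.vars_finite (ts i)

lemma Atom.vars_finite : ∀ a : Atom σ, a.vars.Finite
  | .eq s u => (Term.vars_finite s).union (Term.vars_finite u)
  | .pred p ts => Set.finite_iUnion fun i => Term.vars_finite (ts i)

lemma conjVars_finite : ∀ L : Conj σ, (conjVars L).Finite
  | [] => by
    convert Set.finite_empty
    ext x
    simp [conjVars]
  | l :: L => by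
    have he : conjVars (l :: L) = l.vars ∪ conjVars L := by
      ext x
      simp only [conjVars, List.mem_cons, Set.mem_setOf_eq, Set.mem_union]
      constructor
      · rintro ⟨l', (rfl | hl'), hx⟩
        · exact Or.inl hx
        · exact Or.inr ⟨l', hl', hx⟩
      · rintro (hx | ⟨l', hl', hx⟩)
        · exact ⟨l, Or.inl rfl, hx⟩
        · exact ⟨l', Or.inr hl', hx⟩
    rw [he]
    exact (Atom.vars_finite _).union (conjVars_finite L)

lemma vars8_finite (S : State8 σ) : (vars8 S).Finite :=
  (conjVars_finite S.1).union (Term.vars_finite S.2)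

lemma depEdge_of_iso {L : Conj σ} {l : Lit σ} (hl : l ∈ L) (hp : l.pos = true)
    {x : ℕ} {t : Term σ} (ha : l.atom = .eq (.var x) t ∨ l.atom = .eq t (.var x))
    {u : ℕ} (hu : u ∈ t.vars) : depEdgeC L x u :=
  ⟨l, hl, hp, t, ha, hu⟩

lemma not_mem_of_step {L : Conj σ} {x : ℕ} {t : Term σ}
    (hl : ∃ l ∈ L, l.pos = true ∧ (l.atom = .eq (.var x) t ∨ l.atom = .eq t (.var x)))
    (hdep : ∀ u ∈ t.vars, ¬ dependsOn L u x) : x ∉ t.vars := by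
  intro hx
  obtain ⟨l, hlL, hp, ha⟩ := hl
  exact hdep x hx (Relation.TransGen.single (depEdge_of_iso hlL hp ha hx))

lemma t_not_var {L : Conj σ} (hacyc : AcyclicDeps L) {x : ℕ} {t : Term σ}
    (hl : ∃ l ∈ L, l.pos = true ∧ (l.atom = .eq (.var x) t ∨ l.atom = .eq t (.var x))) :
    ∀ w, t ≠ .var w := by
  rintro w rfl
  obtain ⟨l, hlL, hp, ha⟩ := hl
  have e1 : depEdgeC L x w := ⟨l, hlL, hp, .var w, ha, by simp [Term.vars]⟩
  have e2 : depEdgeC L w x := ⟨l, hlL, hp, .var x, ha.symm, by simp [Term.vars]⟩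
  exact hacyc x (Relation.TransGen.head e1 (Relation.TransGen.single e2))

lemma depEdge_conjSubst_aux {L : Conj σ} {x : ℕ} {t : Term σ}
    (hnv : ∀ w, t ≠ .var w)
    (hl0 : ∃ l ∈ L, l.pos = true ∧ (l.atom = .eq (.var x) t ∨ l.atom = .eq t (.var x)))
    {l : Lit σ} (hl : l ∈ L) (hp : l.pos = true) {a b : Term σ}
    (hA : l.atom = .eq a b ∨ l.atom = .eq b a)
    {v u : ℕ} (hav : a.subst x t = .var v) (hu : u ∈ (b.subst x t).vars) :
    dependsOn L v u := by
  have ha : a = .var v := by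
    cases a with
    | var y =>
      by_cases hy : y = x
      · subst hy
        simp only [Term.subst, if_pos rfl] at hav
        exact absurd hav (hnv v)
      · simpa [Term.subst, hy] using hav
    | app g ts => simp [Term.subst] at hav
  subst ha
  have hedge : ∀ w ∈ b.vars, depEdgeC L v w := fun w hw => ⟨l, hl, hp, b, hA, hw⟩
  rcases Term.vars_subst hu with ⟨h1, _⟩ | ⟨h1, h2⟩
  · exact Relation.TransGen.single (hedge u h1)
  · obtain ⟨l0, hl0L, hp0, ha0⟩ := hl0
    exact Relation.TransGen.head (hedge x h1)
      (Relation.TransGen.single (depEdge_of_iso hl0L hp0 ha0 h2))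

lemma depEdge_conjSubst {L : Conj σ} {x : ℕ} {t : Term σ}
    (hnv : ∀ w, t ≠ .var w)
    (hl0 : ∃ l ∈ L, l.pos = true ∧ (l.atom = .eq (.var x) t ∨ l.atom = .eq t (.var x)))
    {v u : ℕ} (h : depEdgeC (conjSubst x t L) v u) : dependsOn L v u := by
  obtain ⟨l', hl', hp', s, hs, hu⟩ := h
  obtain ⟨l, hl, rfl⟩ := List.mem_map.mp hl'
  have hp : l.pos = true := hp'
  cases hA : l.atom with
  | pred p ts => simp [Lit.subst, Atom.subst, hA] at hs
  | eq a b =>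
    simp only [Lit.subst, hA, Atom.subst, Atom.eq.injEq] at hs
    rcases hs with ⟨h1, h2⟩ | ⟨h1, h2⟩
    · exact depEdge_conjSubst_aux hnv hl0 hl hp (Or.inl hA) h1 (by rw [h2]; exact hu)
    · exact depEdge_conjSubst_aux hnv hl0 hl hp (Or.inr hA) h2 (by rw [h1]; exact hu)

lemma dependsOn_conjSubst {L : Conj σ} {x : ℕ} {t : Term σ}
    (hnv : ∀ w, t ≠ .var w)
    (hl0 : ∃ l ∈ L, l.pos = true ∧ (l.atom = .eq (.var x) t ∨ l.atom = .eq t (.var x)))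
    {v u : ℕ} (h : dependsOn (conjSubst x t L) v u) : dependsOn L v u := by
  induction h with
  | single h => exact depEdge_conjSubst hnv hl0 h
  | tail _ h ih => exact ih.trans (depEdge_conjSubst hnv hl0 h)

lemma acyclic_conjSubst {L : Conj σ} (hacyc : AcyclicDeps L) {x : ℕ} {t : Term σ}
    (hl0 : ∃ l ∈ L, l.pos = true ∧ (l.atom = .eq (.var x) t ∨ l.atom = .eq t (.var x))) :
    AcyclicDeps (conjSubst x t L) :=
  fun w hw => hacyc w (dependsOn_conjSubst (t_not_var hacyc hl0) hl0 hw)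

lemma tvars_subset {L : Conj σ} {x : ℕ} {t : Term σ}
    (hl0 : ∃ l ∈ L, l.pos = true ∧ (l.atom = .eq (.var x) t ∨ l.atom = .eq t (.var x))) :
    t.vars ⊆ conjVars L := by
  obtain ⟨l, hl, hp, ha⟩ := hl0
  intro u hu
  refine ⟨l, hl, ?_⟩
  rcases ha with h | h
  · show u ∈ l.atom.vars
    rw [h]
    exact Set.mem_union_right _ hu
  · show u ∈ l.atom.vars
    rw [h]
    exact Set.mem_union_left _ hu

lemma Atom.vars_subst {a : Atom σ} {x : ℕ} {t : Term σ} {u : ℕ}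
    (h : u ∈ (a.subst x t).vars) : (u ∈ a.vars ∧ u ≠ x) ∨ u ∈ t.vars := by
  cases a with
  | eq s₁ s₂ =>
    simp only [Atom.subst, Atom.vars, Set.mem_union] at h ⊢
    rcases h with h | h
    · rcases Term.vars_subst h with ⟨h1, h2⟩ | ⟨_, h2⟩
      · exact Or.inl ⟨Or.inl h1, h2⟩
      · exact Or.inr h2
    · rcases Term.vars_subst h with ⟨h1, h2⟩ | ⟨_, h2⟩
      · exact Or.inl ⟨Or.inr h1, h2⟩
      · exact Or.inr h2
  | pred p ts =>
    simp only [Atom.subst, Atom.vars, Set.mem_iUnion] at h ⊢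
    obtain ⟨i, hi⟩ := h
    rcases Term.vars_subst hi with ⟨h1, h2⟩ | ⟨_, h2⟩
    · exact Or.inl ⟨⟨i, h1⟩, h2⟩
    · exact Or.inr h2

lemma conjVars_subst {L : Conj σ} {x : ℕ} {t : Term σ} {u : ℕ}
    (h : u ∈ conjVars (conjSubst x t L)) : (u ∈ conjVars L ∧ u ≠ x) ∨ u ∈ t.vars := by
  obtain ⟨l', hl', hu⟩ := h
  obtain ⟨l, hl, rfl⟩ := List.mem_map.mp hl'
  rcases Atom.vars_subst (a := l.atom) hu with ⟨h1, h2⟩ | h1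
  · exact Or.inl ⟨⟨l, hl, h1⟩, h2⟩
  · exact Or.inr h1

lemma vars8_step_ssub {S S' : State8 σ} (h : SubstStep8 S S') : vars8 S' ⊂ vars8 S := by
  obtain ⟨x, hx, t, hl0, hdep, rfl⟩ := h
  have hxt : x ∉ t.vars := not_mem_of_step hl0 hdep
  have hts : t.vars ⊆ conjVars S.1 := tvars_subset hl0
  constructor
  · intro u hu
    simp only [vars8, Set.mem_union] at hu ⊢
    rcases hu with hu | hu
    · rcases conjVars_subst hu with ⟨h1, _⟩ | h1
      · exact Or.inl h1
      · exact Or.inl (hts h1)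
    · rcases Term.vars_subst hu with ⟨h1, _⟩ | ⟨_, h2⟩
      · exact Or.inr h1
      · exact Or.inl (hts h2)
  · intro hsub
    have hx' := hsub hx
    simp only [vars8, Set.mem_union] at hx'
    rcases hx' with hx' | hx'
    · rcases conjVars_subst hx' with ⟨_, h2⟩ | h1
      · exact h2 rfl
      · exact hxt h1
    · rcases Term.vars_subst hx' with ⟨_, h2⟩ | ⟨_, h2⟩
      · exact h2 rfl
      · exact hxt h2

/-- Invariant of the substitution process. -/
def Inv8 (S : State8 σ) : Prop :=
  (∀ x ∈ vars8 S, ∃ l ∈ S.1, isolator x l) ∧ AcyclicDeps S.1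

lemma inv8_step {S S' : State8 σ} (hS : Inv8 S) (h : SubstStep8 S S') : Inv8 S' := by
  obtain ⟨x, hx, t, hl0, hdep, rfl⟩ := h
  obtain ⟨hiso, hacyc⟩ := hS
  have hxt : x ∉ t.vars := not_mem_of_step hl0 hdep
  have hts : t.vars ⊆ conjVars S.1 := tvars_subset hl0
  constructor
  · intro y hy
    simp only [vars8, Set.mem_union] at hy
    have hy' : y ∈ vars8 S ∧ y ≠ x := by
      rcases hy with hy | hy
      · rcases conjVars_subst hy with ⟨h1, h2⟩ | h1
        · exact ⟨Or.inl h1, h2⟩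
        · exact ⟨Or.inl (hts h1), fun he => hxt (he ▸ h1)⟩
      · rcases Term.vars_subst hy with ⟨h1, h2⟩ | ⟨_, h2⟩
        · exact ⟨Or.inr h1, h2⟩
        · exact ⟨Or.inl (hts h2), fun he => hxt (he ▸ h2)⟩
    obtain ⟨l, hl, hlp, s, hls⟩ := hiso y hy'.1
    refine ⟨l.subst x t, List.mem_map_of_mem hl, hlp, s.subst x t, ?_⟩
    rcases hls with h | h
    · left
      show Atom.subst l.atom x t = _
      rw [h]
      simp [Atom.subst, Term.subst, hy'.2]
    · right
      show Atom.subst l.atom x t = _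
      rw [h]
      simp [Atom.subst, Term.subst, hy'.2]
  · exact acyclic_conjSubst hacyc hl0

lemma equiv_step (I : Interp σ) (f : Term σ) (hf : f.vars = ∅)
    {S S' : State8 σ} (h : SubstStep8 S S') :
    (∀ ν, SatConj I ν S.1 → f.eval I ν = S.2.eval I ν) ↔
    (∀ ν, SatConj I ν S'.1 → f.eval I ν = S'.2.eval I ν) := by
  obtain ⟨x, hx, t, hl0, hdep, rfl⟩ := h
  obtain ⟨l, hl, hp, ha⟩ := hl0
  constructor
  · intro H ν hsat
    rw [satConj_subst] at hsat
    rw [Term.eval_subst]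
    exact (eval_ground I hf ν _).trans (H _ hsat)
  · intro H ν hsat
    have hsl := hsat l hl
    simp only [Lit.SatL, hp, if_true] at hsl
    have hxval : ν x = t.eval I ν := by
      rcases ha with h | h
      · rw [h] at hsl
        simpa only [Atom.SatA, Term.eval] using hsl
      · rw [h] at hsl
        simpa only [Atom.SatA, Term.eval] using hsl.symm
    have hupd : updAssign ν x (t.eval I ν) = ν := by
      funext y
      simp only [updAssign]
      split
      · next he => subst he; exact hxval.symm
      · rfl
    have hs2 : SatConj I ν (conjSubst x t S.1) := by
      rw [satConj_subst, hupd]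
      exact hsat
    have := H ν hs2
    rwa [Term.eval_subst, hupd] at this

lemma equiv_reach (I : Interp σ) (f : Term σ) (hf : f.vars = ∅) {S₀ S : State8 σ}
    (h : Relation.ReflTransGen SubstStep8 S₀ S) :
    (∀ ν, SatConj I ν S₀.1 → f.eval I ν = S₀.2.eval I ν) ↔
    (∀ ν, SatConj I ν S.1 → f.eval I ν = S.2.eval I ν) := by
  induction h with
  | refl => exact Iff.rfl
  | tail _ hstep ih => exact ih.trans (equiv_step I f hf hstep)

end ASPMT

namespace ASPMT

/-- Let `D` be an implication `B → (f = v)` where `B` is a conjunction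
of possibly negated atomic formulas, `f` is a ground term, and every variable
occurring in `D` (including `v`) occurs in some non-negated conjunct of `B` of the
form `x = t` or `t = x`, with the variable dependency graph of `B` acyclic.  Then
the substitution process that, while some variable `x` remains in `D`, selects a
non-negated conjunct `x = t` or `t = x` in the body `B` such that no variable
occurring in `t` depends on `x` and replaces `D` by `D^x_t`, terminates in a
formula containing no variables, and the universal closure of `D` is logically
equivalent to the resulting variable-free formula. -/
theorem subst_process_imp {σ : Signature}
    (f : Term σ) (hf : f.vars = ∅) (v : ℕ) (B : Conj σ)
    (hiso : ∀ x ∈ insert v (conjVars B), ∃ l ∈ B, isolator x l)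
    (hacyc : AcyclicDeps B) :
    -- the process terminates: there is no infinite sequence of substitution steps
    (¬ ∃ g : ℕ → State8 σ, g 0 = (B, Term.var v) ∧
      ∀ n, SubstStep8 (g n) (g (n + 1))) ∧
    -- progress: as long as a variable remains, a substitution step applies
    (∀ S, Relation.ReflTransGen SubstStep8 (B, Term.var v) S → vars8 S ≠ ∅ →
      ∃ S', SubstStep8 S S') ∧
    -- any variable-free result is logically equivalent to the ∀-closure of `D`
    (∀ S, Relation.ReflTransGen SubstStep8 (B, Term.var v) S → vars8 S = ∅ →
      ∀ (I : Interp σ) (ν' : ℕ → I.M),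
        ((∀ ν : ℕ → I.M, SatConj I ν B → f.eval I ν = ν v) ↔
          (SatConj I ν' S.1 → f.eval I ν' = S.2.eval I ν'))) := by
  have hinv : ∀ S, Relation.ReflTransGen SubstStep8 (B, Term.var v) S → Inv8 S := by
    intro S hS
    induction hS with
    | refl =>
      refine ⟨?_, hacyc⟩
      intro x hx
      apply hiso
      simp only [vars8, Set.mem_union] at hx
      rcases hx with hx | hx
      · exact Set.mem_insert_of_mem _ hx
      · simp only [Term.vars, Set.mem_singleton_iff] at hx
        subst hx
        exact Set.mem_insert _ _
    | tail _ hstep ih => exact inv8_step ih hstep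
  refine ⟨?_, ?_, ?_⟩
  · rintro ⟨g, hg0, hgs⟩
    have hm : ∀ n, ((vars8_finite (g (n + 1))).toFinset).card <
        ((vars8_finite (g n)).toFinset).card := by
      intro n
      apply Finset.card_lt_card
      rw [Set.Finite.toFinset_ssubset_toFinset]
      exact vars8_step_ssub (hgs n)
    have hmono : ∀ n, ((vars8_finite (g n)).toFinset).card + n ≤
        ((vars8_finite (g 0)).toFinset).card := by
      intro n
      induction n with
      | zero => simp
      | succ k ih => have := hm k; omega
    have := hmono (((vars8_finite (g 0)).toFinset).card + 1)
    omega
  · intro S hS hne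
    obtain ⟨x, hx⟩ := Set.nonempty_iff_ne_empty.mpr hne
    obtain ⟨hI, hA⟩ := hinv S hS
    obtain ⟨l, hl, hp, t, ha⟩ := hI x hx
    refine ⟨(conjSubst x t S.1, S.2.subst x t), x, hx, t, ⟨l, hl, hp, ha⟩, ?_, rfl⟩
    intro u hu hdep
    exact hA x (Relation.TransGen.head (depEdge_of_iso hl hp ha hu) hdep)
  · intro S hS hvars I ν'
    have hEq : (∀ ν : ℕ → I.M, SatConj I ν B → f.eval I ν = ν v) ↔
        (∀ ν, SatConj I ν S.1 → f.eval I ν = S.2.eval I ν) :=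
      equiv_reach I f hf hS
    rw [vars8] at hvars
    have hvars : conjVars S.1 = ∅ ∧ S.2.vars = ∅ := by
      constructor <;> [exact Set.subset_eq_empty (hvars ▸ Set.subset_union_left) rfl;
        exact Set.subset_eq_empty (hvars ▸ Set.subset_union_right) rfl]
    have hP : ∀ ν ν'' : ℕ → I.M,
        (SatConj I ν S.1 → f.eval I ν = S.2.eval I ν) ↔
        (SatConj I ν'' S.1 → f.eval I ν'' = S.2.eval I ν'') := by
      intro ν ν''
      rw [satConj_congr I (fun y hy => absurd (hvars.1 ▸ hy) (Set.notMem_empty y)),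
        eval_ground I hf ν ν'', eval_ground I hvars.2 ν ν'']
    refine hEq.trans ⟨fun H => H ν', fun H ν => (hP ν ν').mpr H⟩

end ASPMT
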